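/- Let τ = t₀ t₁ ... be a stream satisfying curve pair (ξ^L, ξ^U): for all i, k, ξ^L(k) ≤ t_{i+k} − t_i ≤ ξ^U(k). Then for any n, m with m ≤ n, the tightened bounds hold: max(ξ^L(n−m), ξ^L(n) − ξ^U(m)) ≤ t_{i+n} − t_{i+m} ≤ min(ξ^U(n−m), ξ^U(n) − ξ^L(m)) for all i ≥ 0. In particular, the deconvolution-refined upper curve ξ'^U(d) = min over n ≥ d of (ξ^U(n) − ξ^L(n−d)) is still a valid upper bound: t_{i+d} − t_i ≤ ξ'^U(d). -/
import Mathlib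


theorem stmt6 (t : ℕ → ℝ) (ξL ξU : ℕ → ℝ)
    (hmono : Monotone t)
    (hcurve : ∀ i k : ℕ, ξL k ≤ t (i + k) - t i ∧ t (i + k) - t i ≤ ξU k) :
    (∀ i n m : ℕ, m ≤ n →
      max (ξL (n - m)) (ξL n - ξU m) ≤ t (i + n) - t (i + m) ∧
      t (i + n) - t (i + m) ≤ min (ξU (n - m)) (ξU n - ξL m)) ∧
    (∀ i d : ℕ,
      BddBelow {x : ℝ | ∃ n : ℕ, d ≤ n ∧ x = ξU n - ξL (n - d)} →
      t (i + d) - t i ≤ sInf {x : ℝ | ∃ n : ℕ, d ≤ n ∧ x = ξU n - ξL (n - d)}) := by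
  have key : ∀ i n m : ℕ, m ≤ n →
      max (ξL (n - m)) (ξL n - ξU m) ≤ t (i + n) - t (i + m) ∧
      t (i + n) - t (i + m) ≤ min (ξU (n - m)) (ξU n - ξL m) := by
    intro i n m hmn
    have h1 := hcurve (i + m) (n - m)
    have heq : i + m + (n - m) = i + n := by omega
    rw [heq] at h1
    have h2 := hcurve i n
    have h3 := hcurve i m
    constructor
    · apply max_le h1.1
      linarith [h2.1, h3.2]
    · apply le_min h1.2
      linarith [h2.2, h3.1]
  refine ⟨key, fun i d _ => ?_⟩
  refine le_csInf ⟨ξU d - ξL (d - d), d, le_refl d, rfl⟩ ?_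
  rintro x ⟨n, hdn, rfl⟩
  have h1 := (key i n d hdn).1
  have h2 := (hcurve i n).2
  have := le_trans (le_max_left _ _) h1
  linarith
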